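/- With the matrix A, values λ₁, and assumptions (F), (G1), (G2) as above, define v_{1,1} = f(k₁)/(λ₁ + w(k₁)(1 − g(0))), recursively v_{1,i} = (f(k_i) + ∑_{j=1}^{i−1} w(k_j)·g(k_i − k_j)·v_{1,j}) / (λ₁ + w(k_i)(1 − g(0))) for 2 ≤ i ≤ r, and v_{1,r+1} = 1 − ∑_{j=1}^r w(k_j)·v_{1,j}. Then the vector v₁ = (v_{1,1}, ..., v_{1,r}, v_{1,r+1})ᵀ satisfies A·v₁ = λ₁·v₁. -/
import Mathlib


open Finset Matrix

/-- The vector `v₁` defined by the recursion (5)/(14) is a right eigenvector of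
the intensity matrix `A` for the eigenvalue `λ₁`. -/
theorem stmt_1
    (r : ℕ) (hr : 0 < r)
    (χ ρ : ℝ) (f g : ℕ → ℝ)
    (k : Fin r → ℕ) (hk1 : ∀ i, 1 ≤ k i) (hkmono : StrictMono k)
    (w : ℕ → ℝ) (hw : ∀ n, w n = χ * n + ρ)
    (hχ : 0 ≤ χ) (hχρ : 0 < χ + ρ)
    (hf0 : ∀ m, 0 ≤ f m) (hg0nonneg : ∀ m, 0 ≤ g m)
    (hg0 : g 0 = 0)
    (M : ℕ) (hfM : ∀ m, M ≤ m → f m = 0) (hgM : ∀ m, M ≤ m → g m = 0)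
    (kr : ℕ) (hkr : kr = k ⟨r - 1, by omega⟩)
    (B : ℕ) (hB : B = M + kr + 1)
    -- assumption (F)
    (hF : ∀ m, m ≤ kr → (∀ i : Fin r, m ≠ k i) → f m = 0)
    -- assumption (G1)
    (hG1 : ∑ m ∈ Finset.range B, g m = 1)
    -- assumption (G2)
    (hG2 : ∀ m, m ≤ kr → (∀ i : Fin r, m ≠ k i) → ∀ j : Fin r, g (m - k j) = 0)
    (lam1 : ℝ)
    (hlam1 : lam1 = ∑ m ∈ Finset.Ico 1 B, (w m * f m + χ * m * g m))
    (A : Matrix (Fin (r + 1)) (Fin (r + 1)) ℝ)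
    (hA : ∀ i j : Fin (r + 1),
      A i j =
        if hi : (i : ℕ) < r then
          if hj : (j : ℕ) < r then
            if (i : ℕ) < (j : ℕ) then w (k ⟨j, hj⟩) * f (k ⟨i, hi⟩)
            else if (i : ℕ) = (j : ℕ) then
              w (k ⟨i, hi⟩) * (f (k ⟨i, hi⟩) + g 0 - 1)
            else w (k ⟨j, hj⟩) * (f (k ⟨i, hi⟩) + g (k ⟨i, hi⟩ - k ⟨j, hj⟩))
          else f (k ⟨i, hi⟩)
        else
          if hj : (j : ℕ) < r then
            w (k ⟨j, hj⟩) *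
              ∑ m ∈ Finset.Ico (kr + 1) B, w m * (f m + g (m - k ⟨j, hj⟩))
          else
            ∑ m ∈ Finset.Ico (kr + 1) B, w m * f m
              + ∑ m ∈ Finset.Ico 1 B, χ * m * g m)
    (v : Fin (r + 1) → ℝ)
    (hvdenom : ∀ i : Fin r, lam1 + w (k i) * (1 - g 0) ≠ 0)
    (hv : ∀ i : Fin r,
      v i.castSucc =
        (f (k i) + ∑ j ∈ Finset.univ.filter (fun j : Fin r => j < i),
            w (k j) * g (k i - k j) * v j.castSucc)
          / (lam1 + w (k i) * (1 - g 0)))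
    (hvlast : v (Fin.last r) = 1 - ∑ j : Fin r, w (k j) * v j.castSucc) :
    A.mulVec v = lam1 • v := by
  -- basic index facts
  have hkle : ∀ i : Fin r, k i ≤ kr := by
    intro i
    rw [hkr]
    exact hkmono.monotone (by rw [Fin.le_def]; have := i.2; simp; omega)
  have hkr1 : 1 ≤ kr := le_trans (hk1 ⟨r - 1, by omega⟩) (by rw [hkr])
  have hB1 : kr + 1 ≤ B := by omega
  have h1B : 1 ≤ B := by omega
  -- A entries
  have hAcc : ∀ i j : Fin r, A i.castSucc j.castSucc =
      if (i : ℕ) < (j : ℕ) then w (k j) * f (k i)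
      else if (i : ℕ) = (j : ℕ) then w (k i) * (f (k i) + g 0 - 1)
      else w (k j) * (f (k i) + g (k i - k j)) := by
    intro i j
    rw [hA]
    simp [Fin.is_lt]
  have hAclast : ∀ i : Fin r, A i.castSucc (Fin.last r) = f (k i) := by
    intro i
    rw [hA]
    simp [Fin.is_lt]
  have hAlastc : ∀ j : Fin r, A (Fin.last r) j.castSucc =
      w (k j) * ∑ m ∈ Finset.Ico (kr + 1) B, w m * (f m + g (m - k j)) := by
    intro j
    rw [hA]
    simp [Fin.is_lt]
  have hAll : A (Fin.last r) (Fin.last r) =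
      (∑ m ∈ Finset.Ico (kr + 1) B, w m * f m)
        + ∑ m ∈ Finset.Ico 1 B, χ * m * g m := by
    rw [hA]
    simp
  -- mulVec expansion
  have hmv : ∀ x : Fin (r + 1), A.mulVec v x =
      (∑ j : Fin r, A x j.castSucc * v j.castSucc) + A x (Fin.last r) * v (Fin.last r) := by
    intro x
    simp only [Matrix.mulVec, dotProduct]
    rw [Fin.sum_univ_castSucc]
  -- Step 1: rows i < r
  have hrow : ∀ i : Fin r, A.mulVec v i.castSucc = lam1 * v i.castSucc := by
    intro i
    have hterm : ∀ j : Fin r, A i.castSucc j.castSucc * v j.castSucc =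
        f (k i) * (w (k j) * v j.castSucc)
        + (if j < i then w (k j) * g (k i - k j) * v j.castSucc else 0)
        - (if j = i then w (k i) * v i.castSucc else 0) := by
      intro j
      rw [hAcc]
      rcases lt_trichotomy i j with h | h | h
      · rw [if_pos (Fin.lt_def.mp h), if_neg (by exact fun hc => absurd h (not_lt.mpr hc.le)),
          if_neg (by exact fun hc => absurd h (by simp [hc]))]
        ring
      · subst h
        rw [if_neg (lt_irrefl _), if_pos rfl, if_neg (lt_irrefl _), if_pos rfl, hg0]
        ring
      · rw [if_neg (by exact not_lt.mpr (le_of_lt (Fin.lt_def.mp h))),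
          if_neg (by exact fun hc => absurd h (by simp [Fin.ext_iff.mpr hc.symm])), if_pos h,
          if_neg (ne_of_lt h)]
        ring
    rw [hmv, Finset.sum_congr rfl fun j _ => hterm j, Finset.sum_sub_distrib,
      Finset.sum_add_distrib, ← Finset.mul_sum, Finset.sum_ite_eq' Finset.univ i,
      ← Finset.sum_filter, hAclast i]
    simp only [Finset.mem_univ, if_pos]
    have hvi : v i.castSucc * (lam1 + w (k i) * (1 - g 0)) =
        f (k i) + ∑ j ∈ Finset.univ.filter (fun j : Fin r => j < i),
          w (k j) * g (k i - k j) * v j.castSucc := by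
      rw [hv i, div_mul_cancel₀ _ (hvdenom i)]
    rw [hvlast] at *
    rw [hg0] at hvi
    linear_combination -hvi
  -- shift lemma
  have hTg0 : ∑ m ∈ Finset.range B, χ * m * g m = ∑ m ∈ Finset.Ico 1 B, χ * m * g m := by
    rw [Finset.range_eq_Ico, ← Finset.sum_Ico_consecutive _ (Nat.zero_le 1) h1B]
    simp
  have hG1' : ∑ m ∈ Finset.range B, g m = 1 := hG1
  have hshift : ∀ c : ℕ, 1 ≤ c → c ≤ kr →
      ∑ m ∈ Finset.Ico 1 B, w m * g (m - c) =
        (∑ m ∈ Finset.Ico 1 B, χ * m * g m) + w c := by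
    intro c hc1 hc2
    have hext : ∑ m ∈ Finset.Ico 1 B, w m * g (m - c) =
        ∑ m ∈ Finset.Ico 1 (B + c), w m * g (m - c) := by
      refine Finset.sum_subset (Finset.Ico_subset_Ico le_rfl (by omega)) ?_
      intro m hm hnm
      simp only [Finset.mem_Ico] at hm hnm
      have : M ≤ m - c := by omega
      rw [hgM _ this]
      ring
    have hsplit : (∑ m ∈ Finset.Ico 1 c, w m * g (m - c))
        + ∑ m ∈ Finset.Ico c (B + c), w m * g (m - c)
        = ∑ m ∈ Finset.Ico 1 (B + c), w m * g (m - c) :=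
      Finset.sum_Ico_consecutive _ hc1 (by omega)
    have hzero : ∑ m ∈ Finset.Ico 1 c, w m * g (m - c) = 0 := by
      refine Finset.sum_eq_zero fun m hm => ?_
      simp only [Finset.mem_Ico] at hm
      rw [Nat.sub_eq_zero_of_le (by omega), hg0]
      ring
    have hre : ∑ m ∈ Finset.Ico c (B + c), w m * g (m - c)
        = ∑ n ∈ Finset.range B, w (c + n) * g n := by
      rw [Finset.sum_Ico_eq_sum_range]
      simp
    rw [hext, ← hsplit, hzero, zero_add, hre]
    have : ∀ n ∈ Finset.range B, w (c + n) * g n = χ * n * g n + (χ * c + ρ) * g n := by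
      intro n _
      rw [hw]
      push_cast
      ring
    rw [Finset.sum_congr rfl this, Finset.sum_add_distrib, ← Finset.mul_sum, hG1', mul_one,
      hTg0, hw]
  -- image lemma for sums over [1, kr]
  have hkey : ∀ φ : ℕ → ℝ, (∀ m, m ≤ kr → (∀ i : Fin r, m ≠ k i) → φ m = 0) →
      ∑ m ∈ Finset.Ico 1 (kr + 1), φ m = ∑ i : Fin r, φ (k i) := by
    intro φ hφ
    have hsub : Finset.univ.image k ⊆ Finset.Ico 1 (kr + 1) := by
      intro m hm
      simp only [Finset.mem_image, Finset.mem_univ, true_and] at hm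
      obtain ⟨i, rfl⟩ := hm
      simp only [Finset.mem_Ico, Nat.lt_succ_iff]
      exact ⟨hk1 i, hkle i⟩
    rw [show ∑ i : Fin r, φ (k i) = ∑ m ∈ Finset.univ.image k, φ m from
      (Finset.sum_image fun x _ y _ h => hkmono.injective h).symm]
    refine (Finset.sum_subset hsub fun m hm hnm => ?_).symm
    simp only [Finset.mem_Ico, Nat.lt_succ_iff] at hm
    refine hφ m hm.2 fun i hi => hnm ?_
    simp only [Finset.mem_image, Finset.mem_univ, true_and]
    exact ⟨i, hi.symm⟩
  have hfsum : ∑ m ∈ Finset.Ico 1 (kr + 1), w m * f m = ∑ i : Fin r, w (k i) * f (k i) :=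
    hkey _ fun m h1 h2 => by rw [hF m h1 h2]; ring
  have hgsum : ∀ j : Fin r, ∑ m ∈ Finset.Ico 1 (kr + 1), w m * g (m - k j)
      = ∑ i : Fin r, w (k i) * g (k i - k j) :=
    fun j => hkey _ fun m h1 h2 => by rw [hG2 m h1 h2 j]; ring
  -- lam1 decomposition
  have hlamsplit : lam1 = (∑ i : Fin r, w (k i) * f (k i))
      + (∑ m ∈ Finset.Ico (kr + 1) B, w m * f m)
      + ∑ m ∈ Finset.Ico 1 B, χ * m * g m := by
    rw [hlam1, Finset.sum_add_distrib,
      ← Finset.sum_Ico_consecutive (fun m => w m * f m) (show 1 ≤ kr + 1 by omega) hB1, hfsum]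
  -- column identities
  have hcol : ∀ j : Fin r,
      (∑ i : Fin r, w (k i) * A i.castSucc j.castSucc) + A (Fin.last r) j.castSucc
        = lam1 * w (k j) := by
    intro j
    have hterm : ∀ i : Fin r, w (k i) * A i.castSucc j.castSucc =
        w (k j) * (w (k i) * f (k i) + w (k i) * g (k i - k j))
          - (if i = j then w (k j) * w (k j) else 0) := by
      intro i
      rw [hAcc]
      rcases lt_trichotomy i j with h | h | h
      · rw [if_pos (Fin.lt_def.mp h), if_neg (by simp [Fin.ext_iff]; omega)]
        have : k i - k j = 0 := Nat.sub_eq_zero_of_le (le_of_lt (hkmono h))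
        rw [this, hg0]
        ring
      · subst h
        rw [if_neg (lt_irrefl _), if_pos rfl, if_pos rfl, Nat.sub_self, hg0]
        ring
      · rw [if_neg (by exact not_lt.mpr (le_of_lt (Fin.lt_def.mp h))),
          if_neg (Nat.ne_of_gt (Fin.lt_def.mp h)), if_neg (ne_of_gt h)]
        ring
    have s1 : ∑ i : Fin r, (if i = j then w (k j) * w (k j) else 0) = w (k j) * w (k j) := by
      rw [Finset.sum_ite_eq' Finset.univ j (fun _ => w (k j) * w (k j))]
      simp
    have s2 : ∑ i : Fin r, w (k j) * (w (k i) * f (k i) + w (k i) * g (k i - k j))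
        = w (k j) * ((∑ i : Fin r, w (k i) * f (k i)) + ∑ i : Fin r, w (k i) * g (k i - k j)) := by
      rw [← Finset.mul_sum, Finset.sum_add_distrib]
    have hsum1 : ∑ i : Fin r, w (k i) * A i.castSucc j.castSucc =
        w (k j) * ((∑ i : Fin r, w (k i) * f (k i)) + ∑ i : Fin r, w (k i) * g (k i - k j))
          - w (k j) * w (k j) := by
      rw [Finset.sum_congr rfl fun i _ => hterm i, Finset.sum_sub_distrib, s1, s2]
    have hA2 : A (Fin.last r) j.castSucc =
        w (k j) * ((∑ m ∈ Finset.Ico (kr + 1) B, w m * f m)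
          + ∑ m ∈ Finset.Ico (kr + 1) B, w m * g (m - k j)) := by
      rw [hAlastc j, ← Finset.sum_add_distrib]
      congr 1
      exact Finset.sum_congr rfl fun m _ => by ring
    have hGU : (∑ i : Fin r, w (k i) * g (k i - k j))
        + ∑ m ∈ Finset.Ico (kr + 1) B, w m * g (m - k j)
        = (∑ m ∈ Finset.Ico 1 B, χ * m * g m) + w (k j) := by
      rw [← hgsum j,
        Finset.sum_Ico_consecutive (fun m => w m * g (m - k j)) (show 1 ≤ kr + 1 by omega) hB1]
      exact hshift (k j) (hk1 j) (hkle j)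
    rw [hsum1, hA2]
    linear_combination w (k j) * hGU - w (k j) * hlamsplit
  have hcollast : (∑ i : Fin r, w (k i) * A i.castSucc (Fin.last r))
      + A (Fin.last r) (Fin.last r) = lam1 := by
    rw [hAll, Finset.sum_congr rfl fun i _ => by rw [hAclast i]]
    linear_combination -hlamsplit
  -- Step 3: last row
  have hQ : ∀ i : Fin r, (∑ j : Fin r, A i.castSucc j.castSucc * v j.castSucc)
      = lam1 * v i.castSucc - A i.castSucc (Fin.last r) * v (Fin.last r) := by
    intro i
    have h := hrow i
    rw [hmv] at h
    linarith
  have hlast : A.mulVec v (Fin.last r) = lam1 * v (Fin.last r) := by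
    rw [hmv]
    have e1 : ∑ j : Fin r, A (Fin.last r) j.castSucc * v j.castSucc
        = lam1 * (∑ j : Fin r, w (k j) * v j.castSucc)
          - ∑ i : Fin r, w (k i) *
              (lam1 * v i.castSucc - A i.castSucc (Fin.last r) * v (Fin.last r)) := by
      have hterm : ∀ j : Fin r, A (Fin.last r) j.castSucc * v j.castSucc
          = lam1 * (w (k j) * v j.castSucc)
            - ∑ i : Fin r, w (k i) * A i.castSucc j.castSucc * v j.castSucc := by
        intro j
        have h := hcol j
        have h2 : A (Fin.last r) j.castSucc
            = lam1 * w (k j) - ∑ i : Fin r, w (k i) * A i.castSucc j.castSucc := by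
          linarith
        rw [h2, sub_mul, Finset.sum_mul]
        ring
      rw [Finset.sum_congr rfl fun j _ => hterm j, Finset.sum_sub_distrib, ← Finset.mul_sum]
      congr 1
      rw [Finset.sum_comm]
      refine Finset.sum_congr rfl fun i _ => ?_
      rw [← hQ i, Finset.mul_sum]
      exact Finset.sum_congr rfl fun j _ => by ring
    have e2 : A (Fin.last r) (Fin.last r)
        = lam1 - ∑ i : Fin r, w (k i) * A i.castSucc (Fin.last r) := by
      linarith [hcollast]
    have e3 : ∑ i : Fin r, w (k i) *
        (lam1 * v i.castSucc - A i.castSucc (Fin.last r) * v (Fin.last r))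
        = lam1 * (∑ j : Fin r, w (k j) * v j.castSucc)
          - (∑ i : Fin r, w (k i) * A i.castSucc (Fin.last r)) * v (Fin.last r) := by
      rw [Finset.mul_sum, Finset.sum_mul, ← Finset.sum_sub_distrib]
      exact Finset.sum_congr rfl fun i _ => by ring
    rw [e1, e2, e3]
    ring
  funext x
  simp only [Pi.smul_apply, smul_eq_mul]
  induction x using Fin.lastCases with
  | last => exact hlast
  | cast i => exact hrow i
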